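/- arXiv:1701.04900 — 4 statements merged into one kernel-verified Lean document; each statement's English description precedes it below -/
import Mathlib

section
/- Let K ⊆ ℝᵐ be nonempty, closed and convex, let f̃(·; y) be continuously differentiable and strongly convex with modulus c on K, with ∇f̃(y; y) = ∇_y f(y), and let g be convex on K. If x̂ minimizes f̃(·; y) + g over K, then (x̂ − y)ᵀ ∇_y f(y) + g(x̂) − g(y) ≤ −c‖x̂ − y‖². -/
theorem stmt_10 (m : ℕ) (K : Set (EuclideanSpace ℝ (Fin m)))
    (hKne : K.Nonempty) (hKcl : IsClosed K) (hKcv : Convex ℝ K)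
    (ftilde g : EuclideanSpace ℝ (Fin m) → ℝ) (c : ℝ) (hc : 0 < c)
    (hdiff : ContDiff ℝ 1 ftilde)
    (hsc : StrongConvexOn K c ftilde)
    (hgcv : ConvexOn ℝ K g)
    (y : EuclideanSpace ℝ (Fin m)) (hy : y ∈ K)
    (v : EuclideanSpace ℝ (Fin m))
    -- gradient consistency: the gradient of the surrogate at y equals ∇f(y) =: v
    (hgrad : gradient ftilde y = v)
    (xhat : EuclideanSpace ℝ (Fin m)) (hxhatK : xhat ∈ K)
    (hmin : ∀ z ∈ K, ftilde xhat + g xhat ≤ ftilde z + g z) :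
    (inner ℝ (xhat - y) v : ℝ) + g xhat - g y ≤ -c * ‖xhat - y‖ ^ 2 := by
  set D : ℝ := ‖xhat - y‖ ^ 2 with hD
  have hnorm : ‖y - xhat‖ = ‖xhat - y‖ := norm_sub_rev _ _
  -- membership of segment points
  have hmem : ∀ t : ℝ, t ∈ Set.Icc (0:ℝ) 1 → (1 - t) • y + t • xhat ∈ K := by
    intro t ht
    exact hKcv hy hxhatK (by linarith [ht.2]) ht.1 (by ring)
  -- strong convexity inequality along the segment from y to xhat
  have hscv : ∀ t : ℝ, t ∈ Set.Ioo (0:ℝ) 1 →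
      ftilde ((1 - t) • y + t • xhat) ≤
        (1 - t) * ftilde y + t * ftilde xhat - (1 - t) * t * (c / 2 * D) := by
    intro t ht
    obtain ⟨ht0, ht1⟩ := ht
    have := hsc.2 hy hxhatK (show (0:ℝ) ≤ 1 - t by linarith) (le_of_lt ht0)
      (show (1 - t) + t = 1 by ring)
    simpa [smul_eq_mul, hnorm, hD] using this
  -- Part B : directional derivative inequality
  -- φ t = ftilde (y + t • (xhat - y))
  set φ : ℝ → ℝ := fun t => ftilde (y + t • (xhat - y)) with hφ
  have hgradAt : HasGradientAt ftilde v y := by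
    have := ((hdiff.differentiable one_ne_zero) y).hasGradientAt
    rwa [hgrad] at this
  have hcurve : HasDerivAt (fun t : ℝ => y + t • (xhat - y)) (xhat - y) 0 := by
    simpa using ((hasDerivAt_id (0:ℝ)).smul_const (xhat - y)).const_add y
  have hφd : HasDerivAt φ (inner ℝ v (xhat - y) : ℝ) 0 := by
    have hF : HasFDerivAt ftilde (InnerProductSpace.toDual ℝ _ v) y :=
      hasGradientAt_iff_hasFDerivAt.mp hgradAt
    have hF' : HasFDerivAt ftilde (InnerProductSpace.toDual ℝ _ v)
        (y + (0:ℝ) • (xhat - y)) := by simpa using hF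
    have := hF'.comp_hasDerivAt 0 hcurve
    simp only [InnerProductSpace.toDual_apply_apply] at this
    exact this
  have hslope : Filter.Tendsto (slope φ 0) (nhdsWithin 0 (Set.Ioi 0))
      (nhds (inner ℝ v (xhat - y) : ℝ)) :=
    (hasDerivAt_iff_tendsto_slope.mp hφd).mono_left
      (nhdsWithin_mono _ (by intro t ht; exact ne_of_gt ht))
  have hItendsto : Filter.Tendsto (fun t : ℝ => ftilde xhat - ftilde y - (1 - t) * (c / 2 * D))
      (nhdsWithin 0 (Set.Ioi 0)) (nhds (ftilde xhat - ftilde y - c / 2 * D)) := by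
    have : Filter.Tendsto (fun t : ℝ => ftilde xhat - ftilde y - (1 - t) * (c / 2 * D))
        (nhds 0) (nhds (ftilde xhat - ftilde y - (1 - 0) * (c / 2 * D))) := by
      exact Filter.Tendsto.sub tendsto_const_nhds
        (((continuous_const.sub continuous_id).mul continuous_const).tendsto 0)
    simpa using this.mono_left nhdsWithin_le_nhds
  have hIoo : Set.Ioo (0:ℝ) 1 ∈ nhdsWithin (0:ℝ) (Set.Ioi 0) :=
    Ioo_mem_nhdsGT_of_mem (by constructor <;> norm_num)
  have hB : (inner ℝ v (xhat - y) : ℝ) ≤ ftilde xhat - ftilde y - c / 2 * D := by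
    refine le_of_tendsto_of_tendsto hslope hItendsto ?_
    filter_upwards [hIoo] with t ht
    have hseg : y + t • (xhat - y) = (1 - t) • y + t • xhat := by
      module
    have h1 := hscv t ht
    rw [← hseg] at h1
    have ht0 : (0:ℝ) < t := ht.1
    have hφ0 : φ 0 = ftilde y := by simp [φ]
    have key : (φ t - φ 0) / (t - 0) ≤ ftilde xhat - ftilde y - (1 - t) * (c / 2 * D) := by
      rw [sub_zero, div_le_iff₀ ht0, hφ0]
      have : φ t ≤ (1 - t) * ftilde y + t * ftilde xhat - (1 - t) * t * (c / 2 * D) := h1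
      nlinarith
    simpa [slope_def_field] using key
  -- Part A : minimality along the segment
  have hA : ftilde xhat + g xhat ≤ ftilde y + g y - c / 2 * D := by
    have hAt : ∀ t : ℝ, t ∈ Set.Ioo (0:ℝ) 1 →
        (1 - t) * (c / 2 * D) ≤ (ftilde y + g y) - (ftilde xhat + g xhat) := by
      intro t ht
      obtain ⟨ht0, ht1⟩ := ht
      -- point on segment from xhat towards y : (1-s)•y + s•xhat with s = 1 - t
      have hs : (1 - t : ℝ) ∈ Set.Ioo (0:ℝ) 1 := ⟨by linarith, by linarith⟩
      set z : EuclideanSpace ℝ (Fin m) := (1 - (1 - t)) • y + (1 - t) • xhat with hz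
      have hzK : z ∈ K := hmem (1 - t) ⟨by linarith, by linarith⟩
      have hmin' := hmin z hzK
      have hf' := hscv (1 - t) hs
      have hz2 : z = t • y + (1 - t) • xhat := by rw [hz]; module
      have hg' : g z ≤ t * g y + (1 - t) * g xhat := by
        rw [hz2]
        have := hgcv.2 hy hxhatK (show (0:ℝ) ≤ 1 - (1 - t) by linarith)
          (show (0:ℝ) ≤ 1 - t by linarith) (show (1 - (1 - t)) + (1 - t) = 1 by ring)
        simpa [smul_eq_mul] using this
      rw [hz] at hmin'
      nlinarith [hf', hg', hmin']
    have htend : Filter.Tendsto (fun t : ℝ => (1 - t) * (c / 2 * D))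
        (nhdsWithin 0 (Set.Ioi 0)) (nhds (c / 2 * D)) := by
      have : Filter.Tendsto (fun t : ℝ => (1 - t) * (c / 2 * D)) (nhds 0)
          (nhds ((1 - 0) * (c / 2 * D))) :=
        ((continuous_const.sub continuous_id).mul continuous_const).tendsto 0
      simpa using this.mono_left nhdsWithin_le_nhds
    have : c / 2 * D ≤ (ftilde y + g y) - (ftilde xhat + g xhat) := by
      refine le_of_tendsto htend ?_
      filter_upwards [hIoo] with t ht
      exact hAt t ht
    linarith
  have hcomm : (inner ℝ (xhat - y) v : ℝ) = (inner ℝ v (xhat - y) : ℝ) := real_inner_comm _ _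
  rw [hcomm]
  nlinarith [hB, hA]
end

section
/- Let K ⊆ ℝᵐ be closed and convex, let f̃(·;·) satisfy: f̃(·;y) is strongly convex with modulus 1 (or more generally the proximal model with quadratic term (1/2)‖y−x‖²), and define ŷ = argmin_{y∈K} { ∇f(x)ᵀ(y−x) + g(y) + (1/2)‖y−x‖² } and x̂ = argmin_{y∈K} { f̃(y; x̃) + g(y) }, where ∇f̃(z; x̃) is Lipschitz in z with constant L_E, Lipschitz in the second argument with constant L_B, and ∇f̃(x; x) = ∇f(x). Then ‖x̂ − ŷ‖ ≤ (1 + L_E)‖x̂ − x‖ + L_B‖x − x̃‖. -/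
open InnerProductSpace

section Aux

variable {E : Type*} [NormedAddCommGroup E] [InnerProductSpace ℝ E] [CompleteSpace E]

private lemma aux_limit (A B : ℝ) (hB : 0 ≤ B)
    (h : ∀ t : ℝ, 0 < t → t < 1 → (1 - t) * B ≤ A) : B ≤ A := by
  by_contra hc
  push_neg at hc
  have h2 := h (1/2) (by norm_num) (by norm_num)
  have hB0 : 0 < B := by nlinarith
  have ht0 : 0 < (B - A) / (2 * B) := div_pos (by linarith) (by linarith)
  have ht1 : (B - A) / (2 * B) < 1 := by
    rw [div_lt_one (by positivity)]; nlinarith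
  have h3 := h _ ht0 ht1
  have : (1 - (B - A) / (2 * B)) * B = B - (B - A) / 2 := by
    field_simp
  rw [this] at h3
  linarith

private lemma norm_combo (a b : E) (t : ℝ) :
    ‖(1 - t) • a + t • b‖ ^ 2
      = (1 - t) * ‖a‖ ^ 2 + t * ‖b‖ ^ 2 - t * (1 - t) * ‖a - b‖ ^ 2 := by
  simp only [← real_inner_self_eq_norm_sq, inner_add_left, inner_add_right,
    inner_sub_left, inner_sub_right, real_inner_smul_left, real_inner_smul_right,
    real_inner_comm a b]
  ring

/-- Variational inequality at a constrained minimizer of `F + g`. -/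
private lemma varIneq {K : Set E} (hKcv : Convex ℝ K) {g F : E → ℝ}
    (hgcv : ConvexOn ℝ K g) {G y : E} (hy : y ∈ K)
    (hF : HasGradientAt F G y)
    (hmin : ∀ w ∈ K, F y + g y ≤ F w + g w) :
    ∀ w ∈ K, 0 ≤ (inner ℝ G (w - y) : ℝ) + g w - g y := by
  intro w hw
  set c : ℝ → ℝ := fun t => F (y + t • (w - y)) with hc
  have hline : HasDerivAt (fun t : ℝ => y + t • (w - y)) (w - y) 0 := by
    simpa using ((hasDerivAt_id (0 : ℝ)).smul_const (w - y)).const_add y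
  have hc0 : HasDerivAt c ((inner ℝ G (w - y) : ℝ)) 0 := by
    have h1 : HasDerivAt c (toDual ℝ E G (w - y)) 0 := by
      have hF' : HasFDerivAt F (toDual ℝ E G) ((fun t : ℝ => y + t • (w - y)) 0) := by
        simpa using hF.hasFDerivAt
      have := hF'.comp_hasDerivAt (0 : ℝ) hline
      exact this
    simpa [toDual_apply_apply] using h1
  -- slope lower bound for small positive t
  have hslope : ∀ t : ℝ, 0 < t → t ≤ 1 → g y - g w ≤ (c t - c 0) / t := by
    intro t ht0 ht1
    have hmem : y + t • (w - y) ∈ K := by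
      have : y + t • (w - y) = (1 - t) • y + t • w := by
        module
      rw [this]
      exact hKcv hy hw (by linarith) (le_of_lt ht0) (by ring)
    have hgle : g (y + t • (w - y)) ≤ (1 - t) * g y + t * g w := by
      have : y + t • (w - y) = (1 - t) • y + t • w := by module
      rw [this]
      exact hgcv.2 hy hw (by linarith) (le_of_lt ht0) (by ring)
    have hmin' := hmin _ hmem
    have hc0' : c 0 = F y := by simp [hc]
    rw [le_div_iff₀ ht0]
    have : c t = F (y + t • (w - y)) := rfl
    nlinarith [hmin', hgle]
  have htend : Filter.Tendsto (slope c 0) (nhdsWithin 0 (Set.Ioi (0:ℝ)))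
      (nhds ((inner ℝ G (w - y) : ℝ))) := by
    have := hasDerivAt_iff_tendsto_slope.mp hc0
    exact this.mono_left (nhdsWithin_mono 0 (fun t ht => ne_of_gt ht))
  have hev : ∀ᶠ t in nhdsWithin 0 (Set.Ioi (0:ℝ)), g y - g w ≤ slope c 0 t := by
    filter_upwards [Ioc_mem_nhdsGT_of_mem (Set.mem_Ico.mpr ⟨le_refl _, zero_lt_one⟩)]
      with t ht
    have := hslope t ht.1 ht.2
    simpa [slope_def_field, div_eq_iff, sub_zero] using this
  have := ge_of_tendsto htend hev
  linarith

end Aux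

theorem stmt_12 (m : ℕ) (K : Set (EuclideanSpace ℝ (Fin m)))
    (hKcl : IsClosed K) (hKcv : Convex ℝ K)
    (f g : EuclideanSpace ℝ (Fin m) → ℝ) (hf : ContDiff ℝ 1 f)
    (hgcv : ConvexOn ℝ K g)
    (L_E L_B : ℝ) (hLE : 0 ≤ L_E) (hLB : 0 ≤ L_B)
    -- the surrogate f̃(z; y): first argument z, second argument the base point y
    (ftilde : EuclideanSpace ℝ (Fin m) → EuclideanSpace ℝ (Fin m) → ℝ)
    -- gradient of the surrogate with respect to its first argument
    (Gf : EuclideanSpace ℝ (Fin m) → EuclideanSpace ℝ (Fin m) → EuclideanSpace ℝ (Fin m))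
    (hGrad : ∀ z y, HasGradientAt (fun w => ftilde w y) (Gf z y) z)
    -- strong convexity with modulus 1 of f̃(·; y)
    (hsc : ∀ y ∈ K, StrongConvexOn K 1 (fun w => ftilde w y))
    -- Lipschitz continuity of the gradient in the first argument (constant L_E)
    (hLipE : ∀ y z z', ‖Gf z y - Gf z' y‖ ≤ L_E * ‖z - z'‖)
    -- Lipschitz continuity of the gradient in the second argument (constant L_B)
    (hLipB : ∀ z y y', ‖Gf z y - Gf z y'‖ ≤ L_B * ‖y - y'‖)
    -- gradient consistency: ∇f̃(x; x) = ∇f(x)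
    (hcons : ∀ x, Gf x x = gradient f x)
    (x xtil : EuclideanSpace ℝ (Fin m)) (hx : x ∈ K) (hxtil : xtil ∈ K)
    (yhat xhat : EuclideanSpace ℝ (Fin m)) (hyhatK : yhat ∈ K) (hxhatK : xhat ∈ K)
    -- ŷ minimizes the proximal linearized model at x
    (hyhat : ∀ w ∈ K,
      (inner ℝ (gradient f x) (yhat - x) : ℝ) + g yhat + (1 / 2) * ‖yhat - x‖ ^ 2 ≤
        (inner ℝ (gradient f x) (w - x) : ℝ) + g w + (1 / 2) * ‖w - x‖ ^ 2)
    -- x̂ minimizes the surrogate model at the delayed point x̃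
    (hxhat : ∀ w ∈ K, ftilde xhat xtil + g xhat ≤ ftilde w xtil + g w) :
    ‖xhat - yhat‖ ≤ (1 + L_E) * ‖xhat - x‖ + L_B * ‖x - xtil‖ := by
  set a := gradient f x with ha
  set d := xhat - yhat with hd
  -- Step 1: three point inequality for the proximal objective
  have H1 : (1/2) * ‖d‖ ^ 2 ≤
      ((inner ℝ a (xhat - x) : ℝ) + g xhat + (1/2) * ‖xhat - x‖ ^ 2)
        - ((inner ℝ a (yhat - x) : ℝ) + g yhat + (1/2) * ‖yhat - x‖ ^ 2) := by
    apply aux_limit _ _ (by positivity)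
    intro t ht0 ht1
    set wt := (1 - t) • yhat + t • xhat with hwt
    have hwtK : wt ∈ K := hKcv hyhatK hxhatK (by linarith) (le_of_lt ht0) (by ring)
    have hmin := hyhat wt hwtK
    have hlin : (inner ℝ a (wt - x) : ℝ)
        = (1 - t) * (inner ℝ a (yhat - x) : ℝ) + t * (inner ℝ a (xhat - x) : ℝ) := by
      have : wt - x = (1 - t) • (yhat - x) + t • (xhat - x) := by
        simp only [hwt]; module
      rw [this, inner_add_right, real_inner_smul_right, real_inner_smul_right]
    have hgle : g wt ≤ (1 - t) * g yhat + t * g xhat :=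
      hgcv.2 hyhatK hxhatK (by linarith) (le_of_lt ht0) (by ring)
    have hquad : ‖wt - x‖ ^ 2 = (1 - t) * ‖yhat - x‖ ^ 2 + t * ‖xhat - x‖ ^ 2
        - t * (1 - t) * ‖d‖ ^ 2 := by
      have h1 : wt - x = (1 - t) • (yhat - x) + t • (xhat - x) := by
        simp only [hwt]; module
      have h2 : (yhat - x) - (xhat - x) = -d := by simp only [hd]; module
      rw [h1, norm_combo, h2, norm_neg]
    rw [hlin, hquad] at hmin
    nlinarith [hmin, hgle]
  -- Step 2: variational inequality at xhat for the surrogate objective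
  have H2 : 0 ≤ (inner ℝ (Gf xhat xtil) (yhat - xhat) : ℝ) + g yhat - g xhat :=
    varIneq hKcv hgcv hxhatK (hGrad xhat xtil) hxhat yhat hyhatK
  -- rewrite inner products in terms of d
  have hinnera : (inner ℝ a (xhat - x) : ℝ) - (inner ℝ a (yhat - x) : ℝ) = inner ℝ a d := by
    rw [← inner_sub_right]; congr 1; simp only [hd]; module
  have hquad2 : (1/2) * ‖xhat - x‖ ^ 2 - (1/2) * ‖yhat - x‖ ^ 2
      = (inner ℝ (xhat - x) d : ℝ) - (1/2) * ‖d‖ ^ 2 := by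
    have h1 : yhat - x = (xhat - x) - d := by simp only [hd]; module
    have h2 : ‖(xhat - x) - d‖ ^ 2
        = ‖xhat - x‖ ^ 2 - 2 * (inner ℝ (xhat - x) d : ℝ) + ‖d‖ ^ 2 :=
      norm_sub_sq_real _ _
    rw [h1, h2]
    ring
  have hG2 : (inner ℝ (Gf xhat xtil) (yhat - xhat) : ℝ) = -(inner ℝ (Gf xhat xtil) d : ℝ) := by
    rw [← inner_neg_right]; congr 1; simp only [hd]; module
  -- combine: ‖d‖² ≤ ⟨a - Gf x̂ x̃, d⟩ + ⟨x̂ - x, d⟩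
  have Hcomb : ‖d‖ ^ 2 ≤ (inner ℝ (a - Gf xhat xtil) d : ℝ) + (inner ℝ (xhat - x) d : ℝ) := by
    rw [inner_sub_left]
    rw [hG2] at H2
    linarith [H1, H2, hinnera, hquad2]
  -- bound the gradient discrepancy
  have hGbound : ‖a - Gf xhat xtil‖ ≤ L_E * ‖xhat - x‖ + L_B * ‖x - xtil‖ := by
    have h1 : ‖Gf x x - Gf xhat x‖ ≤ L_E * ‖x - xhat‖ := hLipE x x xhat
    have h2 : ‖Gf xhat x - Gf xhat xtil‖ ≤ L_B * ‖x - xtil‖ := hLipB xhat x xtil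
    have h3 : a - Gf xhat xtil = (Gf x x - Gf xhat x) + (Gf xhat x - Gf xhat xtil) := by
      rw [ha, ← hcons x]; module
    calc ‖a - Gf xhat xtil‖ ≤ ‖Gf x x - Gf xhat x‖ + ‖Gf xhat x - Gf xhat xtil‖ := by
          rw [h3]; exact norm_add_le _ _
      _ ≤ L_E * ‖x - xhat‖ + L_B * ‖x - xtil‖ := by linarith
      _ = L_E * ‖xhat - x‖ + L_B * ‖x - xtil‖ := by rw [norm_sub_rev]
  have hCS1 : (inner ℝ (a - Gf xhat xtil) d : ℝ) ≤ ‖a - Gf xhat xtil‖ * ‖d‖ :=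
    real_inner_le_norm _ _
  have hCS2 : (inner ℝ (xhat - x) d : ℝ) ≤ ‖xhat - x‖ * ‖d‖ := real_inner_le_norm _ _
  have hfinal : ‖d‖ ^ 2 ≤ ((1 + L_E) * ‖xhat - x‖ + L_B * ‖x - xtil‖) * ‖d‖ := by
    nlinarith [Hcomb, hCS1, hCS2, hGbound, norm_nonneg d]
  rcases eq_or_lt_of_le (norm_nonneg d) with h0 | h0
  · rw [← h0]; positivity
  · have := (mul_le_mul_iff_of_pos_right h0).mp (by nlinarith [hfinal] : ‖d‖ * ‖d‖ ≤ ((1 + L_E) * ‖xhat - x‖ + L_B * ‖x - xtil‖) * ‖d‖)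
    exact this
end

section
/- Let f : ℝⁿ → ℝ be C¹ with L_f-Lipschitz gradient, g : ℝⁿ → ℝ convex (block separable), K convex, and suppose the update x⁺ = x + γ(x̂ − x̃ component) satisfies the sufficient-decrease chain: if (x̂ − x̃)ᵀ∇f(x̃) + g(x̂) − g(x̃) ≤ −c‖x̂ − x̃‖², then F(x⁺) ≤ F(x) − γ(c − γL_f)‖x̂ − x̃‖² + (L_f/2)‖x − x̃‖², where F = f + g, x̃ is a delayed iterate with the updated block agreeing between x and x̃, and γ ∈ (0,1]. -/
set_option maxHeartbeats 1000000

open RealInnerProductSpace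

/-- Descent lemma: C¹ function with `L`-Lipschitz gradient. -/
lemma descent_lemma {n : ℕ} (f : EuclideanSpace ℝ (Fin n) → ℝ) (L : ℝ) (hL : 0 ≤ L)
    (hf : ContDiff ℝ 1 f)
    (hLip : ∀ x y : EuclideanSpace ℝ (Fin n),
      ‖gradient f x - gradient f y‖ ≤ L * ‖x - y‖)
    (x v : EuclideanSpace ℝ (Fin n)) :
    f (x + v) ≤ f x + ⟪gradient f x, v⟫ + L / 2 * ‖v‖ ^ 2 := by
  have hdiff : ∀ y, DifferentiableAt ℝ f y := fun y =>
    (hf.differentiable one_ne_zero).differentiableAt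
  set φ' : ℝ → ℝ := fun t => ⟪gradient f (x + t • v), v⟫ with hφ'
  have hline : ∀ t : ℝ, HasDerivAt (fun s : ℝ => x + s • v) v t := by
    intro t
    simpa using ((hasDerivAt_id t).smul_const v).const_add x
  have hDeriv : ∀ t : ℝ, HasDerivAt (fun s : ℝ => f (x + s • v)) (φ' t) t := by
    intro t
    have hg := (hdiff (x + t • v)).hasGradientAt
    have hF := hg.hasFDerivAt
    have := hF.comp_hasDerivAt t (hline t)
    simpa [hφ', Function.comp_def] using this
  -- continuity of the gradient along the line
  have hgradLip : LipschitzWith (Real.toNNReal L) (gradient f) := by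
    apply LipschitzWith.of_dist_le_mul
    intro a b
    rw [dist_eq_norm]
    calc ‖gradient f a - gradient f b‖ ≤ L * ‖a - b‖ := hLip a b
      _ = (Real.toNNReal L) * dist a b := by
          rw [dist_eq_norm, Real.coe_toNNReal L hL]
  have hcont : Continuous φ' := by
    apply Continuous.inner
    · exact hgradLip.continuous.comp (by continuity)
    · exact continuous_const
  have key : f (x + v) - f x = ∫ t in (0:ℝ)..1, φ' t := by
    rw [intervalIntegral.integral_eq_sub_of_hasDerivAt (fun t _ => hDeriv t)
      (hcont.intervalIntegrable 0 1)]
    simp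
  have hbound : ∀ t ∈ Set.Icc (0:ℝ) 1, φ' t ≤ φ' 0 + L * t * ‖v‖ ^ 2 := by
    intro t ht
    have h1 : φ' t - φ' 0 = ⟪gradient f (x + t • v) - gradient f (x + (0:ℝ) • v), v⟫ := by
      simp [hφ', inner_sub_left]
    have h2 : ⟪gradient f (x + t • v) - gradient f (x + (0:ℝ) • v), v⟫ ≤
        ‖gradient f (x + t • v) - gradient f (x + (0:ℝ) • v)‖ * ‖v‖ :=
      real_inner_le_norm _ _
    have h3 : ‖gradient f (x + t • v) - gradient f (x + (0:ℝ) • v)‖ ≤ L * (t * ‖v‖) := by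
      have := hLip (x + t • v) (x + (0:ℝ) • v)
      have heq : (x + t • v) - (x + (0:ℝ) • v) = t • v := by
        simp
      rw [heq, norm_smul] at this
      simpa [abs_of_nonneg ht.1] using this
    nlinarith [norm_nonneg v, mul_le_mul_of_nonneg_right h3 (norm_nonneg v)]
  have hInt : ∫ t in (0:ℝ)..1, φ' t ≤ ∫ t in (0:ℝ)..1, (φ' 0 + L * t * ‖v‖ ^ 2) := by
    apply intervalIntegral.integral_mono_on zero_le_one
      (hcont.intervalIntegrable 0 1)
      ((continuous_const.add ((continuous_const.mul continuous_id).mul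
        continuous_const)).intervalIntegrable 0 1)
    exact hbound
  have hRHS : ∫ t in (0:ℝ)..1, (φ' 0 + L * t * ‖v‖ ^ 2) = φ' 0 + L / 2 * ‖v‖ ^ 2 := by
    have : (fun t : ℝ => φ' 0 + L * t * ‖v‖ ^ 2) =
        fun t : ℝ => φ' 0 + (L * ‖v‖ ^ 2) * t := by
      funext t; ring
    rw [this, intervalIntegral.integral_add (intervalIntegrable_const)
      ((intervalIntegral.intervalIntegrable_id).const_mul _),
      intervalIntegral.integral_const, intervalIntegral.integral_const_mul,
      integral_id]
    simp only [smul_eq_mul]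
    ring
  have hφ'0 : φ' 0 = ⟪gradient f x, v⟫ := by simp [hφ']
  have hfinal : f (x + v) - f x ≤ φ' 0 + L / 2 * ‖v‖ ^ 2 := by
    rw [key]; exact hInt.trans_eq hRHS
  rw [hφ'0] at hfinal
  linarith

/-- Deterministic single-iteration descent estimate (chain (43)) for a block update:
`f` is C¹ with `L_f`-Lipschitz gradient, `g = ∑ⱼ gⱼ` is block-separable convex,
the delayed iterate `x̃` agrees with `x` on the updated scalar block `i`, the
best response `x̂` at `x̃` satisfies the sufficient-descent inequality with modulus `c`,
and the update changes only block `i` via `x⁺ᵢ = xᵢ + γ(x̂ᵢ − xᵢ)`. -/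
theorem stmt_18 (n : ℕ) (f : EuclideanSpace ℝ (Fin n) → ℝ) (L_f c γ : ℝ)
    (hf : ContDiff ℝ 1 f) (hLf : 0 < L_f) (hc : 0 < c)
    (hγ0 : 0 < γ) (hγ1 : γ ≤ 1)
    (gblk : Fin n → ℝ → ℝ) (hgcv : ∀ j, ConvexOn ℝ Set.univ (gblk j))
    (hLip : ∀ x y : EuclideanSpace ℝ (Fin n),
      ‖gradient f x - gradient f y‖ ≤ L_f * ‖x - y‖)
    (x xtil xhat : EuclideanSpace ℝ (Fin n)) (i : Fin n)
    -- Assumption D4: the updated block agrees between the current and delayed iterate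
    (hblock : x i = xtil i)
    -- sufficient-descent property of the best response at the delayed point (Proposition 1)
    (hdesc : (xhat i - xtil i) * gradient f xtil i + gblk i (xhat i) - gblk i (xtil i) ≤
      -c * (xhat i - xtil i) ^ 2)
    (xplus : EuclideanSpace ℝ (Fin n))
    -- the update changes only block i
    (hupd : xplus = Function.update x i (x i + γ * (xhat i - x i))) :
    f xplus + ∑ j, gblk j (xplus j) ≤
      (f x + ∑ j, gblk j (x j)) - γ * (c - γ * L_f) * (xhat i - xtil i) ^ 2 +
        L_f / 2 * ‖x - xtil‖ ^ 2 := by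
  set d : ℝ := xhat i - xtil i with hd
  set v : EuclideanSpace ℝ (Fin n) := EuclideanSpace.single i (γ * d) with hv
  have hxv : xplus = x + v := by
    ext j
    rw [hupd]
    by_cases hji : j = i
    · subst hji
      simp [hv, hblock, hd, EuclideanSpace.single_apply]
    · simp [hv, Function.update_of_ne hji, EuclideanSpace.single_apply, hji]
  have hnv : ‖v‖ ^ 2 = γ ^ 2 * d ^ 2 := by
    rw [hv, EuclideanSpace.norm_single, Real.norm_eq_abs, sq_abs]
    ring
  -- descent lemma
  have hdl := descent_lemma f L_f hLf.le hf hLip x v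
  rw [← hxv] at hdl
  have hinner : ⟪gradient f x, v⟫ = γ * d * (gradient f x) i := by
    rw [hv, real_inner_comm, EuclideanSpace.inner_single_left]
    simp [mul_comm]
  -- g terms
  have hgsum : ∑ j, gblk j (xplus j) - ∑ j, gblk j (x j) =
      gblk i (x i + γ * d) - gblk i (x i) := by
    rw [← Finset.sum_sub_distrib]
    rw [Finset.sum_eq_single i]
    · rw [hupd]; simp [hd, hblock]
    · intro j _ hji
      rw [hupd, Function.update_of_ne hji]; ring
    · simp
  have hgcvx : gblk i (x i + γ * d) ≤ (1 - γ) * gblk i (x i) + γ * gblk i (xhat i) := by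
    have := (hgcv i).2 (Set.mem_univ (x i)) (Set.mem_univ (xhat i))
      (by linarith : (0:ℝ) ≤ 1 - γ) hγ0.le (by ring : (1 - γ) + γ = 1)
    have harg : (1 - γ) • (x i) + γ • (xhat i) = x i + γ * d := by
      simp only [smul_eq_mul, hd, hblock]
      ring
    rwa [harg] at this
  -- gradient coordinate bound
  have hcoord : |(gradient f x) i - (gradient f xtil) i| ≤ L_f * ‖x - xtil‖ := by
    have h1 : |(gradient f x - gradient f xtil) i| ≤ ‖gradient f x - gradient f xtil‖ := by
      have := EuclideanSpace.norm_eq (gradient f x - gradient f xtil)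
      rw [this]
      have : |(gradient f x - gradient f xtil) i| =
          Real.sqrt (|(gradient f x - gradient f xtil) i| ^ 2) := by
        rw [Real.sqrt_sq (abs_nonneg _)]
      rw [this]
      apply Real.sqrt_le_sqrt
      exact Finset.single_le_sum (f := fun j => ‖(gradient f x - gradient f xtil) j‖ ^ 2)
        (fun j _ => by positivity) (Finset.mem_univ i) |>.trans_eq' (by simp)
    have h2 : (gradient f x - gradient f xtil) i =
        (gradient f x) i - (gradient f xtil) i := rfl
    rw [h2] at h1
    exact h1.trans (hLip x xtil)
  -- assemble
  have hcross : γ * d * ((gradient f x) i - (gradient f xtil) i) ≤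
      L_f / 2 * (γ ^ 2 * d ^ 2) + L_f / 2 * ‖x - xtil‖ ^ 2 := by
    have h1 : γ * d * ((gradient f x) i - (gradient f xtil) i) ≤
        |γ * d| * (L_f * ‖x - xtil‖) := by
      calc γ * d * ((gradient f x) i - (gradient f xtil) i)
          ≤ |γ * d * ((gradient f x) i - (gradient f xtil) i)| := le_abs_self _
        _ = |γ * d| * |(gradient f x) i - (gradient f xtil) i| := abs_mul _ _
        _ ≤ |γ * d| * (L_f * ‖x - xtil‖) :=
            mul_le_mul_of_nonneg_left hcoord (abs_nonneg _)
    have hy : |γ * d| * ‖x - xtil‖ ≤ ((γ * d) ^ 2 + ‖x - xtil‖ ^ 2) / 2 := by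
      rw [← sq_abs (γ * d)]
      nlinarith [sq_nonneg (|γ * d| - ‖x - xtil‖)]
    have h2 : |γ * d| * (L_f * ‖x - xtil‖) ≤
        L_f / 2 * (γ * d) ^ 2 + L_f / 2 * ‖x - xtil‖ ^ 2 := by
      have := mul_le_mul_of_nonneg_left hy hLf.le
      nlinarith [this]
    clear_value d v
    nlinarith [h1, h2, mul_pow γ d 2]
  have hsum_ineq : ∑ j, gblk j (xplus j) ≤
      ∑ j, gblk j (x j) + γ * (gblk i (xhat i) - gblk i (xtil i)) := by
    have : gblk i (x i + γ * d) - gblk i (x i) ≤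
        γ * (gblk i (xhat i) - gblk i (xtil i)) := by
      rw [← hblock]; linarith
    linarith [hgsum, this]
  rw [hinner, hnv] at hdl
  -- combine everything
  have hA : γ * (d * gradient f xtil i + gblk i (xhat i) - gblk i (xtil i)) ≤
      γ * (-c * d ^ 2) := mul_le_mul_of_nonneg_left hdesc hγ0.le
  clear_value d v
  linarith [hdl, hsum_ineq, hcross, hA]
end

section
/- Let h_log : ℝ → ℝ be defined by h_log(x) = log(1 + θ|x|)/log(1 + θ) for θ > 0, and set η = θ/log(1+θ). Then h⁻(x) := η|x| − h_log(x) is convex and continuously differentiable on ℝ, with derivative (h⁻)'(x) = sign(x)·(θ/log(1+θ))·(θ|x|/(1+θ|x|)) for x ≠ 0 and (h⁻)'(0) = 0. -/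
/-- DC decomposition of the logarithmic sparsity regularizer
`h_log(x) = log(1 + θ|x|)/log(1 + θ)`: with `η = θ/log(1+θ)`, the function
`h⁻(x) = η|x| − h_log(x)` is convex and continuously differentiable on ℝ, with
derivative `sign(x) · (θ/log(1+θ)) · (θ|x|/(1+θ|x|))` (which is `0` at `x = 0`). -/
theorem stmt_19 (θ : ℝ) (hθ : 0 < θ)
    (η : ℝ) (hη : η = θ / Real.log (1 + θ))
    (hminus : ℝ → ℝ)
    (hdef : ∀ x, hminus x = η * |x| - Real.log (1 + θ * |x|) / Real.log (1 + θ))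
    (d : ℝ → ℝ)
    (hd : ∀ x, d x = Real.sign x * (θ / Real.log (1 + θ)) * (θ * |x| / (1 + θ * |x|))) :
    ConvexOn ℝ Set.univ hminus ∧ (∀ x, HasDerivAt hminus (d x) x) ∧ Continuous d := by
  set L := Real.log (1 + θ) with hLdef
  have hL : 0 < L := Real.log_pos (by linarith)
  have hden : ∀ x : ℝ, 0 < 1 + θ * |x| := by
    intro x
    have := abs_nonneg x
    nlinarith
  -- alternate form of d
  have hd' : ∀ x, d x = (θ ^ 2 / L) * (x / (1 + θ * |x|)) := by
    intro x
    rw [hd]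
    rcases lt_trichotomy x 0 with hx | hx | hx
    · rw [Real.sign_of_neg hx, abs_of_neg hx]
      have h1 : 0 < 1 + θ * (-x) := by nlinarith
      field_simp
    · simp [hx]
    · rw [Real.sign_of_pos hx, abs_of_pos hx]
      have h1 : 0 < 1 + θ * x := by nlinarith
      field_simp
  -- continuity of d
  have hcontd : Continuous d := by
    have : Continuous fun x : ℝ => (θ ^ 2 / L) * (x / (1 + θ * |x|)) := by
      apply Continuous.mul continuous_const
      exact continuous_id.div (by continuity) (fun x => (hden x).ne')
    exact (funext hd' ▸ this)
  -- monotonicity of d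
  have hmono : Monotone d := by
    have hm : Monotone fun x : ℝ => x / (1 + θ * |x|) := by
      intro a b hab
      simp only
      rw [div_le_div_iff₀ (hden a) (hden b)]
      rcases abs_cases a with ⟨ha, ha'⟩ | ⟨ha, ha'⟩ <;>
        rcases abs_cases b with ⟨hb, hb'⟩ | ⟨hb, hb'⟩ <;> rw [ha, hb]
      · nlinarith
      · nlinarith
      · have h1 : a * (1 + θ * b) ≤ 0 :=
          mul_nonpos_of_nonpos_of_nonneg ha'.le (by nlinarith)
        have h2 : (0:ℝ) ≤ b * (1 + θ * -a) :=
          mul_nonneg hb' (by nlinarith)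
        linarith
      · nlinarith
    have hc : 0 ≤ θ ^ 2 / L := by positivity
    intro a b hab
    rw [hd' a, hd' b]
    exact mul_le_mul_of_nonneg_left (hm hab) hc
  -- derivative everywhere
  have hmain : ∀ x, HasDerivAt hminus (d x) x := by
    intro x
    rcases lt_trichotomy x 0 with hx | hx | hx
    · -- x < 0
      have h1 : 0 < 1 - θ * x := by nlinarith
      have hlin : HasDerivAt (fun y : ℝ => 1 - θ * y) (-θ) x := by
        simpa using ((hasDerivAt_id x).const_mul θ).const_sub 1
      have hlog : HasDerivAt (fun y : ℝ => Real.log (1 - θ * y)) ((1 - θ * x)⁻¹ * (-θ)) x :=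
        by have := (Real.hasDerivAt_log h1.ne').comp x hlin; exact this
      have hfull : HasDerivAt (fun y : ℝ => η * (-y) - Real.log (1 - θ * y) / L)
          (η * (-1) - ((1 - θ * x)⁻¹ * (-θ)) / L) x := by
        exact (((hasDerivAt_id x).neg.const_mul η)).sub (hlog.div_const L)
      have heq : hminus =ᶠ[nhds x] fun y : ℝ => η * (-y) - Real.log (1 - θ * y) / L := by
        filter_upwards [Iio_mem_nhds hx] with y hy
        rw [hdef y, abs_of_neg hy]
        ring_nf
      have := hfull.congr_of_eventuallyEq heq
      refine this.congr_deriv ?_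
      symm
      rw [hd' x, abs_of_neg hx, hη]
      have h2 : (0:ℝ) < -(θ * x * L) + L := by nlinarith
      field_simp [h1.ne', hL.ne', h2.ne']
      rw [div_eq_iff (by nlinarith : (1 + -(θ * x)) ≠ 0)]
      ring
    · -- x = 0
      subst hx
      have hmz : hminus 0 = 0 := by simp [hdef 0]
      have hdz : d 0 = 0 := by simp [hd' 0]
      rw [hdz, hasDerivAt_iff_isLittleO]
      simp only [sub_zero, smul_zero, hmz]
      have hbound : ∀ x : ℝ, ‖hminus x‖ ≤ (θ ^ 2 / L) * ‖x ^ 2‖ := by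
        intro x
        set t := θ * |x| with htdef
        have ht : 0 ≤ t := by positivity
        have h1t : 0 < 1 + t := by linarith
        have hup : Real.log (1 + t) ≤ t := by
          have := Real.log_le_sub_one_of_pos h1t
          linarith
        have hlo : t - t ^ 2 ≤ Real.log (1 + t) := by
          have hinv := Real.log_le_sub_one_of_pos (inv_pos.2 h1t)
          rw [Real.log_inv] at hinv
          have hu : (1 + t)⁻¹ * (1 + t) = 1 := inv_mul_cancel₀ h1t.ne'
          nlinarith [sq_nonneg t, inv_pos.2 h1t]
        have hm : hminus x = (t - Real.log (1 + t)) / L := by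
          rw [hdef x, hη]
          field_simp
          rfl
        have ht2 : t ^ 2 = θ ^ 2 * x ^ 2 := by
          rw [htdef, mul_pow, sq_abs]
        rw [hm, Real.norm_eq_abs, Real.norm_eq_abs, abs_div,
          abs_of_nonneg (by linarith : (0:ℝ) ≤ t - Real.log (1 + t)),
          abs_of_pos hL, abs_of_nonneg (sq_nonneg x)]
        rw [div_le_iff₀ hL]
        have hEq : θ ^ 2 / L * x ^ 2 * L = θ ^ 2 * x ^ 2 := by field_simp
        linarith [hlo, hEq, ht2]
      have hO : (fun x : ℝ => hminus x) =O[nhds 0] fun x => x ^ 2 :=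
        Asymptotics.IsBigO.of_bound _ (Filter.Eventually.of_forall hbound)
      have ho : (fun x : ℝ => x ^ 2) =o[nhds (0:ℝ)] fun x => x := by
        simpa using Asymptotics.isLittleO_pow_pow (𝕜 := ℝ) one_lt_two
      exact hO.trans_isLittleO ho
    · -- x > 0
      have h1 : 0 < 1 + θ * x := by nlinarith
      have hlin : HasDerivAt (fun y : ℝ => 1 + θ * y) θ x := by
        simpa using ((hasDerivAt_id x).const_mul θ).const_add 1
      have hlog : HasDerivAt (fun y : ℝ => Real.log (1 + θ * y)) ((1 + θ * x)⁻¹ * θ) x :=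
        by have := (Real.hasDerivAt_log h1.ne').comp x hlin; exact this
      have hfull : HasDerivAt (fun y : ℝ => η * y - Real.log (1 + θ * y) / L)
          (η * 1 - ((1 + θ * x)⁻¹ * θ) / L) x :=
        ((hasDerivAt_id x).const_mul η).sub (hlog.div_const L)
      have heq : hminus =ᶠ[nhds x] fun y : ℝ => η * y - Real.log (1 + θ * y) / L := by
        filter_upwards [Ioi_mem_nhds hx] with y hy
        rw [hdef y, abs_of_pos hy]
      have := hfull.congr_of_eventuallyEq heq
      refine this.congr_deriv ?_
      symm
      rw [hd' x, abs_of_pos hx, hη]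
      field_simp [h1.ne', hL.ne']
      ring
  -- convexity
  have hdiff : Differentiable ℝ hminus := fun x => (hmain x).differentiableAt
  have hderiv_eq : deriv hminus = d := funext fun x => (hmain x).deriv
  refine ⟨?_, hmain, hcontd⟩
  apply MonotoneOn.convexOn_of_deriv convex_univ hdiff.continuous.continuousOn
    (hdiff.differentiableOn)
  rw [interior_univ, hderiv_eq]
  exact hmono.monotoneOn _
end
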